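/- Let R → A be a homomorphism of associative unital rings and let (F, C) be an Ext^1-orthogonal pair of classes of left R-modules admitting special precover sequences. Assume that the underlying left R-module of A belongs to F, that for every F ∈ F the underlying left R-module of Hom_R(A, F) belongs to F, and that the class F is resolving in the category of left R-modules. Let M be a left R-module of F-resolution dimension ≤ l. Then the F-resolution dimension of the underlying left R-module of Hom_R(A, M) also does not exceed l. -/

import Mathlib

/-! Common definitions for the formalization of statements from
"An explicit self-dual construction of complete cotorsion pairs in the relative context". -/

open CategoryTheory

universe u

noncomputable section

noncomputable instance moduleCatHasExt (A : Type u) [Ring A] :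
    HasExt.{u+1} (ModuleCat.{u} A) :=
  letI := HasDerivedCategory.standard (ModuleCat.{u} A)
  hasExt_of_hasDerivedCategory _

namespace CotorsionPaper

section OneRing

variable {A : Type u} [Ring A]

/-- `Ext^n_A(X, Y) = 0`. -/
def extVanish (X Y : ModuleCat.{u} A) (n : ℕ) : Prop :=
  Subsingleton (Abelian.Ext X Y n)

/-- Two classes of left `A`-modules are `Ext^1`-orthogonal. -/
def Ext1Orthogonal (F C : Set (ModuleCat.{u} A)) : Prop :=
  ∀ X ∈ F, ∀ Y ∈ C, extVanish X Y 1

/-- `F^{⊥₁}`. -/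
def rightPerp (F : Set (ModuleCat.{u} A)) : Set (ModuleCat.{u} A) :=
  {Y | ∀ X ∈ F, extVanish X Y 1}

/-- `^{⊥₁}C`. -/
def leftPerp (C : Set (ModuleCat.{u} A)) : Set (ModuleCat.{u} A) :=
  {X | ∀ Y ∈ C, extVanish X Y 1}

/-- `(F, C)` is a cotorsion pair. -/
def IsCotorsionPair (F C : Set (ModuleCat.{u} A)) : Prop :=
  C = rightPerp F ∧ F = leftPerp C

/-- `M` admits a special precover sequence `0 → C' → F → M → 0` with `F ∈ F`, `C' ∈ C`. -/
def HasSpecialPrecover (F C : Set (ModuleCat.{u} A)) (M : ModuleCat.{u} A) : Prop :=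
  ∃ (C' Fm : ModuleCat.{u} A) (i : C' ⟶ Fm) (p : Fm ⟶ M) (w : i ≫ p = 0),
    (ShortComplex.mk i p w).ShortExact ∧ Fm ∈ F ∧ C' ∈ C

/-- `M` admits a special preenvelope sequence `0 → M → C → F' → 0` with `C ∈ C`, `F' ∈ F`. -/
def HasSpecialPreenvelope (F C : Set (ModuleCat.{u} A)) (M : ModuleCat.{u} A) : Prop :=
  ∃ (Cm F' : ModuleCat.{u} A) (i : M ⟶ Cm) (p : Cm ⟶ F') (w : i ≫ p = 0),
    (ShortComplex.mk i p w).ShortExact ∧ Cm ∈ C ∧ F' ∈ F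

/-- The pair `(F, C)` admits approximation sequences. -/
def HasApproximations (F C : Set (ModuleCat.{u} A)) : Prop :=
  (∀ M : ModuleCat.{u} A, HasSpecialPrecover F C M) ∧
  (∀ M : ModuleCat.{u} A, HasSpecialPreenvelope F C M)

/-- `(F, C)` is a complete cotorsion pair. -/
def IsCompleteCotorsionPair (F C : Set (ModuleCat.{u} A)) : Prop :=
  IsCotorsionPair F C ∧ HasApproximations F C

/-- Hereditariness: `Ext^n(F, C) = 0` for all `F ∈ F`, `C ∈ C` and `n ≥ 1`. -/
def IsHereditary (F C : Set (ModuleCat.{u} A)) : Prop :=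
  ∀ X ∈ F, ∀ Y ∈ C, ∀ n : ℕ, 1 ≤ n → extVanish X Y n

/-- `X^⊕`: the class of all direct summands of modules from `X`. -/
def summands (X : Set (ModuleCat.{u} A)) : Set (ModuleCat.{u} A) :=
  {M | ∃ Y ∈ X, ∃ (i : M ⟶ Y) (r : Y ⟶ M), i ≫ r = 𝟙 M}

def ClosedUnderExtensions (F : Set (ModuleCat.{u} A)) : Prop :=
  ∀ (S : ShortComplex (ModuleCat.{u} A)), S.ShortExact → S.X₁ ∈ F → S.X₃ ∈ F → S.X₂ ∈ F

def ClosedUnderEpiKernels (F : Set (ModuleCat.{u} A)) : Prop :=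
  ∀ (S : ShortComplex (ModuleCat.{u} A)), S.ShortExact → S.X₂ ∈ F → S.X₃ ∈ F → S.X₁ ∈ F

def ClosedUnderMonoCokernels (C : Set (ModuleCat.{u} A)) : Prop :=
  ∀ (S : ShortComplex (ModuleCat.{u} A)), S.ShortExact → S.X₁ ∈ C → S.X₂ ∈ C → S.X₃ ∈ C

def EveryModuleIsQuotient (F : Set (ModuleCat.{u} A)) : Prop :=
  ∀ M : ModuleCat.{u} A, ∃ X ∈ F, ∃ p : X ⟶ M, Epi p

def EveryModuleIsSubmodule (C : Set (ModuleCat.{u} A)) : Prop :=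
  ∀ M : ModuleCat.{u} A, ∃ X ∈ C, ∃ i : M ⟶ X, Mono i

/-- `F` is a resolving class. -/
def IsResolving (F : Set (ModuleCat.{u} A)) : Prop :=
  ClosedUnderExtensions F ∧ ClosedUnderEpiKernels F ∧ EveryModuleIsQuotient F

/-- `C` is a coresolving class. -/
def IsCoresolving (C : Set (ModuleCat.{u} A)) : Prop :=
  ClosedUnderExtensions C ∧ ClosedUnderMonoCokernels C ∧ EveryModuleIsSubmodule C

/-- `M` has `F`-resolution dimension at most `k`: there is an exact sequence
`0 → F_k → ⋯ → F_0 → M → 0` with all `F_i ∈ F` (encoded as an everywhere exact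
`ℕ`-indexed resolution vanishing in degrees `> k`). -/
def ResolutionDimLE (F : Set (ModuleCat.{u} A)) (M : ModuleCat.{u} A) (k : ℕ) : Prop :=
  ∃ (G : ℕ → ModuleCat.{u} A) (d : ∀ m, G (m+1) ⟶ G m) (ε : G 0 ⟶ M)
    (hd : ∀ m, d (m+1) ≫ d m = 0) (hε : d 0 ≫ ε = 0),
    (∀ i, i ≤ k → G i ∈ F) ∧ (∀ i, k < i → Limits.IsZero (G i)) ∧ Epi ε ∧
    (ShortComplex.mk (d 0) ε hε).Exact ∧
    (∀ m, (ShortComplex.mk (d (m+1)) (d m) (hd m)).Exact)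

/-- `M` has `C`-coresolution dimension at most `k`: there is an exact sequence
`0 → M → C^0 → ⋯ → C^k → 0` with all `C^i ∈ C`. -/
def CoresolutionDimLE (C : Set (ModuleCat.{u} A)) (M : ModuleCat.{u} A) (k : ℕ) : Prop :=
  ∃ (G : ℕ → ModuleCat.{u} A) (d : ∀ m, G m ⟶ G (m+1)) (η : M ⟶ G 0)
    (hd : ∀ m, d m ≫ d (m+1) = 0) (hη : η ≫ d 0 = 0),
    (∀ i, i ≤ k → G i ∈ C) ∧ (∀ i, k < i → Limits.IsZero (G i)) ∧ Mono η ∧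
    (ShortComplex.mk η (d 0) hη).Exact ∧
    (∀ m, (ShortComplex.mk (d m) (d (m+1)) (hd m)).Exact)

/-- `N` is `α`-cofiltered by the class `T`: there is an `α`-indexed cofiltration of `N`
(a compatible inverse system with `G 0 = 0`, `G α = N`, surjective successor transition
maps, which is continuous -- i.e. maps isomorphically onto the inverse limit -- at limit
ordinals) whose successive kernels are isomorphic to modules from `T`. -/
def IsCofilteredBy (T : Set (ModuleCat.{u} A)) (α : Ordinal.{u}) (N : ModuleCat.{u} A) : Prop :=
  ∃ (G : ∀ i : Ordinal.{u}, i ≤ α → ModuleCat.{u} A)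
    (π : ∀ (i j : Ordinal.{u}) (hj : j ≤ i) (hi : i ≤ α), G i hi ⟶ G j (hj.trans hi)),
    (∀ i (hi : i ≤ α), π i i le_rfl hi = 𝟙 (G i hi)) ∧
    (∀ i j k (hk : k ≤ j) (hj : j ≤ i) (hi : i ≤ α),
      π i j hj hi ≫ π j k hk (hj.trans hi) = π i k (hk.trans hj) hi) ∧
    Limits.IsZero (G 0 (show (0 : Ordinal.{u}) ≤ α from zero_le)) ∧
    G α le_rfl = N ∧
    (∀ i (hi : i + 1 ≤ α), Epi (π (i+1) i (show i ≤ i + 1 from le_self_add) hi)) ∧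
    (∀ i (hi : i ≤ α), Order.IsSuccLimit i →
      (∀ x y : G i hi,
        (∀ j (hj : j < i), π i j hj.le hi x = π i j hj.le hi y) → x = y) ∧
      (∀ c : ∀ (j : Ordinal.{u}) (hj : j < i), G j (hj.le.trans hi),
        (∀ j k (hk : k < j) (hj : j < i),
          π j k hk.le (hj.le.trans hi) (c j hj) = c k (hk.trans hj)) →
        ∃ x : G i hi, ∀ j (hj : j < i), π i j hj.le hi x = c j hj)) ∧
    (∀ i (hi : i + 1 ≤ α), ∃ X ∈ T,
      Nonempty ((LinearMap.ker (π (i+1) i (show i ≤ i + 1 from le_self_add) hi).hom) ≃ₗ[A] X))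

/-- `Cof_α(T)`. -/
def Cof (T : Set (ModuleCat.{u} A)) (α : Ordinal.{u}) : Set (ModuleCat.{u} A) :=
  {N | IsCofilteredBy T α N}

/-- `Cof(T)`: the union of `Cof_α(T)` over all ordinals `α`. -/
def CofAll (T : Set (ModuleCat.{u} A)) : Set (ModuleCat.{u} A) :=
  {N | ∃ α : Ordinal.{u}, IsCofilteredBy T α N}

/-- `M` is `α`-filtered by the class `S`: there is an increasing, continuous chain of
submodules starting at `0` and ending at `M` whose successive quotients are isomorphic
to modules from `S`. -/
def IsFilteredBy (S : Set (ModuleCat.{u} A)) (α : Ordinal.{u}) (M : ModuleCat.{u} A) : Prop :=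
  ∃ Fl : ∀ i : Ordinal.{u}, i ≤ α → Submodule A M,
    (∀ i j (hj : j ≤ i) (hi : i ≤ α), Fl j (hj.trans hi) ≤ Fl i hi) ∧
    Fl 0 (show (0 : Ordinal.{u}) ≤ α from zero_le) = ⊥ ∧
    Fl α le_rfl = ⊤ ∧
    (∀ i (hi : i ≤ α), Order.IsSuccLimit i →
      Fl i hi = ⨆ (j : Ordinal.{u}) (hj : j < i), Fl j (hj.le.trans hi)) ∧
    (∀ i (hi : i + 1 ≤ α), ∃ X ∈ S,
      Nonempty ((↥(Fl (i+1) hi) ⧸ (Submodule.comap (Fl (i+1) hi).subtype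
        (Fl i ((show i ≤ i + 1 from le_self_add).trans hi)))) ≃ₗ[A] X))

/-- `Fil_α(S)`. -/
def Fil (S : Set (ModuleCat.{u} A)) (α : Ordinal.{u}) : Set (ModuleCat.{u} A) :=
  {M | IsFilteredBy S α M}

/-- `Fil(S)`: the union of `Fil_α(S)` over all ordinals `α`. -/
def FilAll (S : Set (ModuleCat.{u} A)) : Set (ModuleCat.{u} A) :=
  {M | ∃ α : Ordinal.{u}, IsFilteredBy S α M}

/-- The product of `κ` copies of `U`. -/
def piPow (U : ModuleCat.{u} A) (κ : Type u) : ModuleCat.{u} A :=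
  ModuleCat.of A (κ → ↥U)

/-- The direct sum of `κ` copies of `U`. -/
def sumPow (U : ModuleCat.{u} A) (κ : Type u) : ModuleCat.{u} A :=
  ModuleCat.of A (κ →₀ ↥U)

/-- `Prod(U)`: direct summands of products of copies of `U`. -/
def ProdClass (U : ModuleCat.{u} A) : Set (ModuleCat.{u} A) :=
  {X | ∃ (κ : Type u) (i : X ⟶ piPow U κ) (r : piPow U κ ⟶ X), i ≫ r = 𝟙 X}

/-- `Add(U)`: direct summands of direct sums of copies of `U`. -/
def AddClass (U : ModuleCat.{u} A) : Set (ModuleCat.{u} A) :=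
  {X | ∃ (κ : Type u) (i : X ⟶ sumPow U κ) (r : sumPow U κ ⟶ X), i ≫ r = 𝟙 X}

/-- `J` is an injective cogenerator. -/
def IsInjectiveCogenerator (J : ModuleCat.{u} A) : Prop :=
  Injective J ∧ IsCoseparator J

/-- `P` is a projective generator. -/
def IsProjectiveGenerator (P : ModuleCat.{u} A) : Prop :=
  Projective P ∧ IsSeparator P

/-- `U` is an `n`-cotilting module: (C1) injective dimension at most `n`;
(C2) `Ext^i(U^κ, U) = 0` for all `i > 0` and all `κ`; (C3) there is an exact sequence
`0 → U_n → ⋯ → U_0 → J → 0` with `J` an injective cogenerator and `U_i ∈ Prod(U)`. -/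
def IsCotilting (n : ℕ) (U : ModuleCat.{u} A) : Prop :=
  CoresolutionDimLE {J : ModuleCat.{u} A | Injective J} U n ∧
  (∀ (κ : Type u) (i : ℕ), 0 < i → extVanish (piPow U κ) U i) ∧
  (∃ J : ModuleCat.{u} A, IsInjectiveCogenerator J ∧ ResolutionDimLE (ProdClass U) J n)

/-- The cotilting class `{}^{⊥_{>0}}U` induced by `U`. -/
def cotiltingClass (U : ModuleCat.{u} A) : Set (ModuleCat.{u} A) :=
  {M | ∀ i : ℕ, 0 < i → extVanish M U i}

/-- `D` admits an `m`-step cofiltration `D = G_m ↠ ⋯ ↠ G_1 ↠ G_0 = 0` with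
`ker (G_{i+1} → G_i)` isomorphic to a module from `T i`. -/
def FinCofilteredLevels (m : ℕ) (T : Fin m → Set (ModuleCat.{u} A)) :
    Set (ModuleCat.{u} A) :=
  {D | ∃ (G : Fin (m+1) → ModuleCat.{u} A) (p : ∀ i : Fin m, G i.succ ⟶ G i.castSucc),
    Limits.IsZero (G 0) ∧ G (Fin.last m) = D ∧ (∀ i, Epi (p i)) ∧
    (∀ i : Fin m, ∃ X ∈ T i, Nonempty ((LinearMap.ker (p i).hom) ≃ₗ[A] X))}

/-- `D` admits an `m`-step cofiltration with all successive kernels isomorphic to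
modules from the class `T`. -/
def FinCofiltered (m : ℕ) (T : Set (ModuleCat.{u} A)) : Set (ModuleCat.{u} A) :=
  FinCofilteredLevels m (fun _ => T)

/-- `G` admits an `m`-step filtration `0 = F_0 ⊆ F_1 ⊆ ⋯ ⊆ F_m = G` with
`F_{i+1}/F_i` isomorphic to a module from `T i`. -/
def FinFilteredLevels (m : ℕ) (T : Fin m → Set (ModuleCat.{u} A)) :
    Set (ModuleCat.{u} A) :=
  {G | ∃ Fl : Fin (m+1) → Submodule A G,
    Monotone Fl ∧ Fl 0 = ⊥ ∧ Fl (Fin.last m) = ⊤ ∧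
    (∀ i : Fin m, ∃ X ∈ T i, Nonempty
      ((↥(Fl i.succ) ⧸ (Submodule.comap (Fl i.succ).subtype (Fl i.castSucc))) ≃ₗ[A] X))}

end OneRing

section TwoRings

variable {R : Type u} {A : Type u} [Ring R] [Ring A]

/-- The underlying left `R`-module of `A`, via `f : R →+* A`. -/
def AasR (f : R →+* A) : ModuleCat.{u} R :=
  (ModuleCat.restrictScalars f).obj (ModuleCat.of A A)

/-- The class of left `A`-modules whose underlying `R`-module belongs to `F`. -/
def liftClass (f : R →+* A) (F : Set (ModuleCat.{u} R)) : Set (ModuleCat.{u} A) :=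
  {M | (ModuleCat.restrictScalars f).obj M ∈ F}

/-- The coinduced module `Hom_R(A, M)`. -/
def coind (f : R →+* A) (M : ModuleCat.{u} R) : ModuleCat.{u} A :=
  (ModuleCat.coextendScalars f).obj M

/-- The class of left `A`-modules of the form `Hom_R(A, C)`, `C ∈ 𝒞` (up to isomorphism). -/
def coindClass (f : R →+* A) (C : Set (ModuleCat.{u} R)) : Set (ModuleCat.{u} A) :=
  {N | ∃ X ∈ C, Nonempty (N ≅ coind f X)}

/-- `(T, η)` is the module induced from the `R`-module `L` along `f`, i.e. `T ≅ A ⊗_R L`: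
`η : L → T` is an `R`-linear map which is universal among `R`-linear maps from `L` to
(the restriction of) left `A`-modules. -/
def IsInducedFrom (f : R →+* A) (L : ModuleCat.{u} R) (T : ModuleCat.{u} A)
    (η : L ⟶ (ModuleCat.restrictScalars f).obj T) : Prop :=
  ∀ (X : ModuleCat.{u} A) (g : L ⟶ (ModuleCat.restrictScalars f).obj X),
    ∃! h : T ⟶ X, η ≫ (ModuleCat.restrictScalars f).map h = g

/-- The class of left `A`-modules of the form `A ⊗_R X`, `X ∈ F`. -/
def indClass (f : R →+* A) (F : Set (ModuleCat.{u} R)) : Set (ModuleCat.{u} A) :=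
  {T | ∃ X ∈ F, ∃ η, IsInducedFrom f X T η}

/-- `Tor^R_i(A, L) = 0` for all `0 < i ≤ n`: there is a projective resolution
`P_• → L` of the `R`-module `L` such that the induced complex of `A`-modules
`A ⊗_R P_•` is exact in homological degrees `1, …, n`. -/
def TorVanishesUpTo (f : R →+* A) (L : ModuleCat.{u} R) (n : ℕ) : Prop :=
  ∃ (P : ℕ → ModuleCat.{u} R) (d : ∀ m, P (m+1) ⟶ P m) (ε : P 0 ⟶ L)
    (hd : ∀ m, d (m+1) ≫ d m = 0) (hε : d 0 ≫ ε = 0),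
    (∀ m, Projective (P m)) ∧ Epi ε ∧ (ShortComplex.mk (d 0) ε hε).Exact ∧
    (∀ m, (ShortComplex.mk (d (m+1)) (d m) (hd m)).Exact) ∧
    ∃ (T : ℕ → ModuleCat.{u} A) (η : ∀ m, P m ⟶ (ModuleCat.restrictScalars f).obj (T m))
      (D : ∀ m, T (m+1) ⟶ T m) (hD : ∀ m, D (m+1) ≫ D m = 0),
      (∀ m, IsInducedFrom f (P m) (T m) (η m)) ∧
      (∀ m, η (m+1) ≫ (ModuleCat.restrictScalars f).map (D m) = d m ≫ η m) ∧
      (∀ j, j + 1 ≤ n → (ShortComplex.mk (D (j+1)) (D j) (hD j)).Exact)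

/-- The `R`-module structure on the character module `A⁺ = Hom_ℤ(A, ℚ/ℤ)`,
given by `(r • φ) a = φ (a * f r)`. -/
def aplusModule (f : R →+* A) : Module R (A →+ AddCircle (1 : ℚ)) where
  smul r φ := φ.comp (AddMonoidHom.mulRight (f r))
  one_smul φ := AddMonoidHom.ext fun a => by
    have h : f (1 : R) = 1 := map_one f
    show φ (a * f 1) = φ a
    rw [h, mul_one]
  mul_smul r s φ := AddMonoidHom.ext fun a => by
    have h : f (r * s) = f r * f s := map_mul f r s
    show φ (a * f (r * s)) = φ (a * f r * f s)
    rw [h, mul_assoc]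
  smul_zero r := AddMonoidHom.ext fun _ => rfl
  smul_add r φ ψ := AddMonoidHom.ext fun _ => rfl
  add_smul r s φ := AddMonoidHom.ext fun a => by
    have h : f (r + s) = f r + f s := map_add f r s
    show φ (a * f (r + s)) = φ (a * f r) + φ (a * f s)
    rw [h, mul_add, map_add]
  zero_smul φ := AddMonoidHom.ext fun a => by
    have h : f (0 : R) = 0 := map_zero f
    show φ (a * f 0) = 0
    rw [h, mul_zero, map_zero]

/-- The character module `A⁺ = Hom_ℤ(A, ℚ/ℤ)` as a left `R`-module. -/
def aplus (f : R →+* A) : ModuleCat.{u} R :=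
  @ModuleCat.of R _ (A →+ AddCircle (1 : ℚ)) _ (aplusModule f)

end TwoRings

end CotorsionPaper

open CotorsionPaper

/-! ### Auxiliary development for Statement 6. -/

namespace CotorsionProof

open CategoryTheory Limits ModuleCat CotorsionPaper

section Splitting

universe w₀ v₀ u₀

variable {D : Type u₀} [Category.{v₀} D] [Abelian D] [HasExt.{w₀} D]

/-- A short exact sequence with vanishing `Ext¹ (X₃, X₁)` admits a section of `g`. -/
lemma exists_section_of_subsingleton_ext {S : ShortComplex D} (hS : S.ShortExact)
    (h : Subsingleton (Abelian.Ext S.X₃ S.X₁ 1)) :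
    ∃ s : S.X₃ ⟶ S.X₂, s ≫ S.g = 𝟙 S.X₃ := by
  letI := HasDerivedCategory.standard D
  have hδ : hS.singleδ = 0 := by
    rw [← hS.extClass_hom, Subsingleton.elim hS.extClass 0, Abelian.Ext.zero_hom]
  obtain ⟨sh, hsh⟩ := Pretriangulated.Triangle.coyoneda_exact₃ _ hS.singleTriangle_distinguished
    (𝟙 _) (by
      rw [Category.id_comp]
      exact hδ)
  change (DerivedCategory.singleFunctor D 0).obj S.X₃ ⟶
    (DerivedCategory.singleFunctor D 0).obj S.X₂ at sh
  let H := DerivedCategory.homologyFunctor D 0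
  let e : DerivedCategory.singleFunctor D 0 ⋙ H ≅ 𝟭 D :=
    Functor.isoWhiskerRight ((SingleFunctors.evaluation _ _ 0).mapIso
      (DerivedCategory.singleFunctorsPostcompQIso D)) H ≪≫
    Functor.associator _ _ _ ≪≫
    Functor.isoWhiskerLeft _ (DerivedCategory.homologyFunctorFactors D 0) ≪≫
    HomologicalComplex.homologyFunctorSingleIso D (ComplexShape.up ℤ) 0
  refine ⟨e.inv.app S.X₃ ≫ H.map sh ≫ e.hom.app S.X₂, ?_⟩
  have hnat := e.hom.naturality S.g
  simp only [Functor.comp_map, Functor.id_map] at hnat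
  have : H.map sh ≫ e.hom.app S.X₂ ≫ S.g = e.hom.app S.X₃ := by
    rw [← hnat, ← Category.assoc, ← Functor.map_comp]
    have h2 : sh ≫ (DerivedCategory.singleFunctor D 0).map S.g = 𝟙 _ := hsh.symm
    rw [h2, CategoryTheory.Functor.map_id, Category.id_comp]
  rw [Category.assoc, Category.assoc, this, Iso.inv_hom_id_app]
  rfl

end Splitting

section ModuleLemmas

variable {R : Type u} [Ring R]

lemma apply_ofInjective_symm {X Y : ModuleCat.{u} R} (fm : X ⟶ Y)
    (hinj : Function.Injective fm) (z : LinearMap.range fm.hom) :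
    fm ((LinearEquiv.ofInjective fm.hom hinj).symm z) = z.val := by
  conv_rhs => rw [← (LinearEquiv.ofInjective fm.hom hinj).apply_symm_apply z]
  rfl

lemma mem_pbker_iff {X₂ X₃ Y : ModuleCat.{u} R} (g : X₂ ⟶ X₃) (p : Y ⟶ X₃)
    (z : X₂ × Y) :
    z ∈ LinearMap.ker ((g.hom.comp (LinearMap.fst R X₂ Y)) - (p.hom.comp (LinearMap.snd R X₂ Y))) ↔
      g z.1 = p z.2 := by
  rw [LinearMap.mem_ker, LinearMap.sub_apply, LinearMap.comp_apply, LinearMap.comp_apply,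
    LinearMap.fst_apply, LinearMap.snd_apply, sub_eq_zero]

/-- Lifting along an epimorphism with kernel having vanishing `Ext¹ (X, -)`. -/
lemma exists_lift_of_subsingleton_ext {S : ShortComplex (ModuleCat.{u} R)} (hS : S.ShortExact)
    {X : ModuleCat.{u} R} (h : Subsingleton (Abelian.Ext X S.X₁ 1)) (g : X ⟶ S.X₃) :
    ∃ g' : X ⟶ S.X₂, g' ≫ S.g = g := by
  classical
  let P : Submodule R (S.X₂ × X) :=
    LinearMap.ker ((S.g.hom.comp (LinearMap.fst R S.X₂ X)) - (g.hom.comp (LinearMap.snd R S.X₂ X)))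
  have hmemP : ∀ (y : S.X₂) (x : X), S.g y = g x → ((y, x) : S.X₂ × X) ∈ P :=
    fun y x hxy => (mem_pbker_iff S.g g (y, x)).2 hxy
  have hPeq : ∀ z : P, S.g z.val.1 = g z.val.2 :=
    fun z => (mem_pbker_iff S.g g z.val).1 z.property
  let PM : ModuleCat.{u} R := ModuleCat.of R P
  let pf : S.X₁ ⟶ PM := ModuleCat.ofHom (LinearMap.codRestrict P (LinearMap.prod S.f.hom 0)
    (fun x₁ => hmemP (S.f x₁) 0 (by rw [map_zero]; exact S.moduleCat_zero_apply x₁)))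
  let pg : PM ⟶ X := ModuleCat.ofHom ((LinearMap.snd R S.X₂ X).comp P.subtype)
  have w : pf ≫ pg = 0 := rfl
  have hexact : (ShortComplex.mk pf pg w).Exact := by
    rw [ShortComplex.moduleCat_exact_iff]
    intro z hz
    have hz2 : z.val.2 = 0 := hz
    have hz1 : S.g z.val.1 = 0 := by rw [hPeq z, hz2, map_zero]
    have : z.val.1 ∈ LinearMap.range S.f.hom := by
      rw [hS.exact.moduleCat_range_eq_ker]; exact hz1
    obtain ⟨x₁, hx₁⟩ := this
    exact ⟨x₁, Subtype.ext (Prod.ext hx₁ hz2.symm)⟩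
  have hmono : Mono pf := (ModuleCat.mono_iff_injective _).2 (by
    intro a b hab
    apply hS.moduleCat_injective_f
    exact congrArg (fun z : P => z.val.1) hab)
  have hepi : Epi pg := (ModuleCat.epi_iff_surjective _).2 (by
    intro x
    obtain ⟨y, hy⟩ := hS.moduleCat_surjective_g (g x)
    exact ⟨⟨(y, x), hmemP y x hy⟩, rfl⟩)
  have hses : (ShortComplex.mk pf pg w).ShortExact := ⟨hexact⟩
  obtain ⟨s, hs⟩ := exists_section_of_subsingleton_ext (D := ModuleCat.{u} R)
    (S := ShortComplex.mk pf pg w) hses h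
  refine ⟨s ≫ ModuleCat.ofHom ((LinearMap.fst R S.X₂ X).comp P.subtype), ?_⟩
  apply ModuleCat.hom_ext
  apply LinearMap.ext
  intro x
  have hsx : (s x).val.2 = x := ConcreteCategory.congr_hom hs x
  have := hPeq (s x)
  rw [hsx] at this
  exact this

end ModuleLemmas

section Resolving

variable {R : Type u} [Ring R] {F : Set (ModuleCat.{u} R)}

/-- Zero modules belong to any resolving class. -/
lemma zero_mem_of_resolving (hres : IsResolving F) {Z : ModuleCat.{u} R}
    (hZ : Limits.IsZero Z) : Z ∈ F := by
  obtain ⟨X, hX, p, hp⟩ := hres.2.2 (ModuleCat.of R PUnit)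
  have hzero : ∀ z : Z, z = 0 := by
    intro z
    have h1 : (𝟙 Z : Z ⟶ Z) = 0 := hZ.eq_of_src _ _
    calc z = (𝟙 Z : Z ⟶ Z) z := rfl
    _ = (0 : Z ⟶ Z) z := by rw [h1]
    _ = 0 := rfl
  have w : (0 : Z ⟶ X) ≫ (𝟙 X) = 0 := by simp
  refine hres.2.1 (ShortComplex.mk (0 : Z ⟶ X) (𝟙 X) w) ?_ hX hX
  have hmono : Mono (ShortComplex.mk (0 : Z ⟶ X) (𝟙 X) w).f := (ModuleCat.mono_iff_injective _).2
    (fun a b _ => by rw [hzero a, hzero b])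
  refine ⟨?_⟩
  rw [ShortComplex.moduleCat_exact_iff]
  intro x₂ hx₂
  exact ⟨0, by simpa using hx₂.symm⟩

/-- A resolving class is closed under isomorphisms. -/
lemma mem_of_iso_of_resolving (hres : IsResolving F) {M N : ModuleCat.{u} R}
    (e : M ≅ N) (hN : N ∈ F) : M ∈ F := by
  have hz : (ModuleCat.of R PUnit) ∈ F :=
    zero_mem_of_resolving hres (ModuleCat.isZero_of_subsingleton _)
  have w : (0 : ModuleCat.of R PUnit ⟶ M) ≫ e.hom = 0 := by simp
  refine hres.1 (ShortComplex.mk (0 : ModuleCat.of R PUnit ⟶ M) e.hom w) ?_ hz hN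
  have hmono : Mono (ShortComplex.mk (0 : ModuleCat.of R PUnit ⟶ M) e.hom w).f :=
    (ModuleCat.mono_iff_injective _).2 (fun a b _ => Subsingleton.elim a b)
  have hepi : Epi (ShortComplex.mk (0 : ModuleCat.of R PUnit ⟶ M) e.hom w).g := by
    show Epi e.hom
    infer_instance
  have hinj : Function.Injective e.hom := (ModuleCat.mono_iff_injective e.hom).1 inferInstance
  refine ⟨?_⟩
  rw [ShortComplex.moduleCat_exact_iff]
  intro x₂ hx₂
  have : x₂ = 0 := hinj (by simpa using hx₂)
  exact ⟨0, by simp [this]⟩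

/-- Inductive characterization of `F`-resolution dimension. -/
def ResDim (F : Set (ModuleCat.{u} R)) : ℕ → ModuleCat.{u} R → Prop
  | 0, M => M ∈ F
  | l+1, M => ∃ (K Fm : ModuleCat.{u} R) (i : K ⟶ Fm) (p : Fm ⟶ M) (w : i ≫ p = 0),
      (ShortComplex.mk i p w).ShortExact ∧ Fm ∈ F ∧ ResDim F l K

/-- Core construction: given a short exact sequence `0 → K → X → G → 0` with `G ∈ F` and
an epimorphism `q : F₀ ↠ X` with `F₀ ∈ F`, the preimage `N` of `K` in `F₀` belongs to `F`
and surjects onto `K` compatibly. -/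
lemma core_construction (hres : IsResolving F) {T : ShortComplex (ModuleCat.{u} R)}
    (hT : T.ShortExact) (hG : T.X₃ ∈ F) {F0 : ModuleCat.{u} R} (hF0 : F0 ∈ F)
    (q : F0 ⟶ T.X₂) (hq : Function.Surjective q) :
    ∃ (N : Submodule R F0) (r : ModuleCat.of R N ⟶ T.X₁),
      ((ModuleCat.of R N : ModuleCat.{u} R) ∈ F) ∧ Function.Surjective r ∧
      (∀ n : N, T.f (r n) = q n.val) ∧ (∀ z : F0, (z ∈ N ↔ T.g (q z) = 0)) := by
  classical
  let N : Submodule R F0 := LinearMap.ker (T.g.hom.comp q.hom)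
  have hNmem : ∀ z : F0, z ∈ N ↔ T.g (q z) = 0 := fun z => LinearMap.mem_ker
  have hinjf : Function.Injective T.f := hT.moduleCat_injective_f
  let e := LinearEquiv.ofInjective T.f.hom hinjf
  have hrange : ∀ n : N, q n.val ∈ LinearMap.range T.f.hom := by
    intro n
    rw [hT.exact.moduleCat_range_eq_ker]
    exact (hNmem n.val).1 n.property
  let iN : ModuleCat.of R N ⟶ F0 := ModuleCat.ofHom N.subtype
  let r : ModuleCat.of R N ⟶ T.X₁ := ModuleCat.ofHom (
    (e.symm : LinearMap.range T.f.hom →ₗ[R] T.X₁).comp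
      (LinearMap.codRestrict (LinearMap.range T.f.hom)
        (q.hom.comp N.subtype) hrange))
  have hfr : ∀ n : N, T.f (r n) = q n.val := by
    intro n
    exact apply_ofInjective_symm (R := R) T.f hinjf ⟨q n.val, hrange n⟩
  have hrsurj : Function.Surjective r := by
    intro k
    obtain ⟨n₀, hn₀⟩ := hq (T.f k)
    have hn₀N : n₀ ∈ N := by
      rw [hNmem, hn₀, T.moduleCat_zero_apply]
    refine ⟨⟨n₀, hn₀N⟩, hinjf ?_⟩
    rw [hfr ⟨n₀, hn₀N⟩, hn₀]
  have hNF : (ModuleCat.of R N : ModuleCat.{u} R) ∈ F := by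
    have w : iN ≫ (q ≫ T.g) = 0 := by
      apply ModuleCat.hom_ext
      apply LinearMap.ext
      intro n
      exact (hNmem n.val).1 n.property
    refine hres.2.1 (ShortComplex.mk iN (q ≫ T.g) w) ?_ hF0 hG
    have hmono : Mono (ShortComplex.mk iN (q ≫ T.g) w).f :=
      (ModuleCat.mono_iff_injective iN).2 Subtype.val_injective
    have hepi : Epi (ShortComplex.mk iN (q ≫ T.g) w).g := by
      have h1 : Function.Surjective T.g := hT.moduleCat_surjective_g
      exact (ModuleCat.epi_iff_surjective _).2 (h1.comp hq)
    refine ⟨?_⟩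
    rw [ShortComplex.moduleCat_exact_iff]
    intro z hz
    exact ⟨⟨z, (hNmem z).2 hz⟩, rfl⟩
  exact ⟨N, r, hNF, hrsurj, hfr, hNmem⟩

/-- The main induction: the two shift lemmas and closedness under extensions
for finite `F`-resolution dimension. -/
lemma shift_and_ext (hres : IsResolving F) : ∀ l : ℕ,
    (∀ (S : ShortComplex (ModuleCat.{u} R)), S.ShortExact → S.X₂ ∈ F →
      ResDim F (l+1) S.X₃ → ResDim F l S.X₁) ∧
    (∀ (S : ShortComplex (ModuleCat.{u} R)), S.ShortExact → S.X₃ ∈ F →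
      ResDim F l S.X₂ → ResDim F l S.X₁) ∧
    (∀ (S : ShortComplex (ModuleCat.{u} R)), S.ShortExact → S.X₃ ∈ F →
      ResDim F l S.X₁ → ResDim F l S.X₂) := by
  have base_quot : ∀ (S : ShortComplex (ModuleCat.{u} R)), S.ShortExact → S.X₃ ∈ F →
      ResDim F 0 S.X₂ → ResDim F 0 S.X₁ := by
    intro S hS h3 h2
    exact hres.2.1 S hS h2 h3
  have base_ext : ∀ (S : ShortComplex (ModuleCat.{u} R)), S.ShortExact → S.X₃ ∈ F →
      ResDim F 0 S.X₁ → ResDim F 0 S.X₂ := by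
    intro S hS h3 h1
    exact hres.1 S hS h1 h3
  -- the shift lemma at level l, given the quotient/extension lemmas at level l
  have step_shift : ∀ l : ℕ,
      (∀ (S : ShortComplex (ModuleCat.{u} R)), S.ShortExact → S.X₃ ∈ F →
        ResDim F l S.X₂ → ResDim F l S.X₁) →
      (∀ (S : ShortComplex (ModuleCat.{u} R)), S.ShortExact → S.X₃ ∈ F →
        ResDim F l S.X₁ → ResDim F l S.X₂) →
      ∀ (S : ShortComplex (ModuleCat.{u} R)), S.ShortExact → S.X₂ ∈ F →
        ResDim F (l+1) S.X₃ → ResDim F l S.X₁ := by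
    rintro l IHquot IHext S hS hX2 ⟨K, Fm, i, p, w, hsep, hFm, hK⟩
    classical
    let P : Submodule R (S.X₂ × Fm) :=
      LinearMap.ker ((S.g.hom.comp (LinearMap.fst R S.X₂ Fm)) - (p.hom.comp (LinearMap.snd R S.X₂ Fm)))
    have hmemP : ∀ (y : S.X₂) (m : Fm), S.g y = p m → ((y, m) : S.X₂ × Fm) ∈ P :=
      fun y m hxy => (mem_pbker_iff S.g p (y, m)).2 hxy
    have hPeq : ∀ z : P, S.g z.val.1 = p z.val.2 :=
      fun z => (mem_pbker_iff S.g p z.val).1 z.property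
    let PM : ModuleCat.{u} R := ModuleCat.of R P
    have hgsurj : Function.Surjective S.g := hS.moduleCat_surjective_g
    have hpsurj : Function.Surjective p := hsep.moduleCat_surjective_g
    -- sequence (α) : 0 → K → P → S.X₂ → 0
    let jα : K ⟶ PM := ModuleCat.ofHom (LinearMap.codRestrict P (LinearMap.prod 0 i.hom)
      (fun k => hmemP 0 (i k) (by
        rw [map_zero, (ShortComplex.mk i p w).moduleCat_zero_apply k])))
    let pα : PM ⟶ S.X₂ := ModuleCat.ofHom ((LinearMap.fst R S.X₂ Fm).comp P.subtype)
    have hjα : ∀ k : K, (jα k).val = (0, i k) := fun k => rfl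
    have wα : jα ≫ pα = 0 := by
      apply ModuleCat.hom_ext
      apply LinearMap.ext
      intro k
      show ((jα k).val).1 = 0
      rw [hjα k]
    have hseα : (ShortComplex.mk jα pα wα).ShortExact := by
      have hmono : Mono (ShortComplex.mk jα pα wα).f := (ModuleCat.mono_iff_injective jα).2 (by
        intro a b hab
        apply hsep.moduleCat_injective_f
        have : (jα a).val = (jα b).val := congrArg Subtype.val hab
        rw [hjα a, hjα b] at this
        exact congrArg Prod.snd this)
      have hepi : Epi (ShortComplex.mk jα pα wα).g := (ModuleCat.epi_iff_surjective pα).2 (by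
        intro y
        obtain ⟨m, hm⟩ := hpsurj (S.g y)
        exact ⟨⟨(y, m), hmemP y m hm.symm⟩, rfl⟩)
      refine ⟨?_⟩
      rw [ShortComplex.moduleCat_exact_iff]
      intro z hz
      have hz1 : z.val.1 = 0 := hz
      have hz2 : p z.val.2 = 0 := by rw [← hPeq z, hz1, map_zero]
      have : z.val.2 ∈ LinearMap.range i.hom := by
        rw [hsep.exact.moduleCat_range_eq_ker]
        exact hz2
      obtain ⟨k, hk⟩ := this
      refine ⟨k, Subtype.ext ?_⟩
      rw [hjα k]
      exact Prod.ext hz1.symm hk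
    -- sequence (β) : 0 → S.X₁ → P → Fm → 0
    let jβ : S.X₁ ⟶ PM := ModuleCat.ofHom (LinearMap.codRestrict P (LinearMap.prod S.f.hom 0)
      (fun x₁ => hmemP (S.f x₁) 0 (by
        rw [map_zero, S.moduleCat_zero_apply x₁])))
    let pβ : PM ⟶ Fm := ModuleCat.ofHom ((LinearMap.snd R S.X₂ Fm).comp P.subtype)
    have hjβ : ∀ x₁ : S.X₁, (jβ x₁).val = (S.f x₁, 0) := fun x₁ => rfl
    have wβ : jβ ≫ pβ = 0 := by
      apply ModuleCat.hom_ext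
      apply LinearMap.ext
      intro x₁
      show ((jβ x₁).val).2 = 0
      rw [hjβ x₁]
    have hseβ : (ShortComplex.mk jβ pβ wβ).ShortExact := by
      have hmono : Mono (ShortComplex.mk jβ pβ wβ).f := (ModuleCat.mono_iff_injective jβ).2 (by
        intro a b hab
        apply hS.moduleCat_injective_f
        have : (jβ a).val = (jβ b).val := congrArg Subtype.val hab
        rw [hjβ a, hjβ b] at this
        exact congrArg Prod.fst this)
      have hepi : Epi (ShortComplex.mk jβ pβ wβ).g := (ModuleCat.epi_iff_surjective pβ).2 (by
        intro m
        obtain ⟨y, hy⟩ := hgsurj (p m)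
        exact ⟨⟨(y, m), hmemP y m hy⟩, rfl⟩)
      refine ⟨?_⟩
      rw [ShortComplex.moduleCat_exact_iff]
      intro z hz
      have hz2 : z.val.2 = 0 := hz
      have hz1 : S.g z.val.1 = 0 := by rw [hPeq z, hz2, map_zero]
      have : z.val.1 ∈ LinearMap.range S.f.hom := by
        rw [hS.exact.moduleCat_range_eq_ker]
        exact hz1
      obtain ⟨x₁, hx₁⟩ := this
      refine ⟨x₁, Subtype.ext ?_⟩
      rw [hjβ x₁]
      exact Prod.ext hx₁ hz2.symm
    have hP : ResDim F l PM := IHext (ShortComplex.mk jα pα wα) hseα hX2 hK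
    exact IHquot (ShortComplex.mk jβ pβ wβ) hseβ hFm hP
  -- the quotient-form shift lemma at level l+1
  have step_quot : ∀ l : ℕ,
      ∀ (S : ShortComplex (ModuleCat.{u} R)), S.ShortExact → S.X₃ ∈ F →
        ResDim F (l+1) S.X₂ → ResDim F (l+1) S.X₁ := by
    rintro l S hS hG ⟨K', F0, i', q, w', hseq, hF0, hK'⟩
    have hqsurj : Function.Surjective q := hseq.moduleCat_surjective_g
    obtain ⟨N, r, hNF, hrsurj, hfr, hNmem⟩ := core_construction hres hS hG hF0 q hqsurj
    let i'' : K' ⟶ ModuleCat.of R N := ModuleCat.ofHom (LinearMap.codRestrict N i'.hom (fun k' => by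
      rw [hNmem]
      rw [(ShortComplex.mk i' q w').moduleCat_zero_apply k', map_zero]))
    have w'' : i'' ≫ r = 0 := by
      apply ModuleCat.hom_ext
      apply LinearMap.ext
      intro k'
      have hf0 : S.f (r (i'' k')) = 0 := by
        rw [hfr (i'' k')]
        exact (ShortComplex.mk i' q w').moduleCat_zero_apply k'
      have h0 : r (i'' k') = 0 := hS.moduleCat_injective_f (by rw [hf0, map_zero])
      exact h0
    have hse'' : (ShortComplex.mk i'' r w'').ShortExact := by
      have hmono : Mono (ShortComplex.mk i'' r w'').f := (ModuleCat.mono_iff_injective i'').2 (by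
        intro a b hab
        apply hseq.moduleCat_injective_f
        exact congrArg Subtype.val hab)
      have hepi : Epi (ShortComplex.mk i'' r w'').g :=
        (ModuleCat.epi_iff_surjective r).2 hrsurj
      refine ⟨?_⟩
      rw [ShortComplex.moduleCat_exact_iff]
      intro n hn
      have hqn : q n.val = 0 := by
        rw [← hfr n, hn, map_zero]
      have : n.val ∈ LinearMap.range i'.hom := by
        rw [hseq.exact.moduleCat_range_eq_ker]
        exact hqn
      obtain ⟨k', hk'⟩ := this
      exact ⟨k', Subtype.ext hk'⟩
    exact ⟨K', ModuleCat.of R N, i'', r, w'', hse'', hNF, hK'⟩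
  -- extension property at level l+1, given the shift lemma at level l+1
  have step_ext : ∀ l : ℕ,
      (∀ (S : ShortComplex (ModuleCat.{u} R)), S.ShortExact → S.X₂ ∈ F →
        ResDim F (l+1) S.X₃ → ResDim F l S.X₁) →
      ∀ (S : ShortComplex (ModuleCat.{u} R)), S.ShortExact → S.X₃ ∈ F →
        ResDim F (l+1) S.X₁ → ResDim F (l+1) S.X₂ := by
    rintro l hshift S hS hG hK
    obtain ⟨F0, hF0, q, hq⟩ := hres.2.2 S.X₂
    have hqsurj : Function.Surjective q := (ModuleCat.epi_iff_surjective q).1 hq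
    obtain ⟨N, r, hNF, hrsurj, hfr, hNmem⟩ := core_construction hres hS hG hF0 q hqsurj
    let Kr : ModuleCat.{u} R := ModuleCat.of R (LinearMap.ker r.hom)
    let krsub : Kr ⟶ ModuleCat.of R N := ModuleCat.ofHom (LinearMap.ker r.hom).subtype
    have w1 : krsub ≫ r = 0 := by
      apply ModuleCat.hom_ext
      apply LinearMap.ext
      intro z
      exact z.property
    have hse1 : (ShortComplex.mk krsub r w1).ShortExact := by
      have hmono : Mono (ShortComplex.mk krsub r w1).f :=
        (ModuleCat.mono_iff_injective krsub).2 Subtype.val_injective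
      have hepi : Epi (ShortComplex.mk krsub r w1).g :=
        (ModuleCat.epi_iff_surjective r).2 hrsurj
      refine ⟨?_⟩
      rw [ShortComplex.moduleCat_exact_iff]
      intro n hn
      exact ⟨⟨n, hn⟩, rfl⟩
    have hKr : ResDim F l Kr := hshift (ShortComplex.mk krsub r w1) hse1 hNF hK
    let j2 : Kr ⟶ F0 := ModuleCat.ofHom (N.subtype.comp (LinearMap.ker r.hom).subtype)
    have w2 : j2 ≫ q = 0 := by
      apply ModuleCat.hom_ext
      apply LinearMap.ext
      intro z
      show q ((z.val : N).val) = 0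
      rw [← hfr z.val, z.property, map_zero]
    have hse2 : (ShortComplex.mk j2 q w2).ShortExact := by
      have hmono : Mono (ShortComplex.mk j2 q w2).f := (ModuleCat.mono_iff_injective j2).2
        (Subtype.val_injective.comp Subtype.val_injective)
      have hepi : Epi (ShortComplex.mk j2 q w2).g := (ModuleCat.epi_iff_surjective q).2 hqsurj
      refine ⟨?_⟩
      rw [ShortComplex.moduleCat_exact_iff]
      intro z hz
      have hzN : z ∈ N := by
        rw [hNmem, hz, map_zero]
      have hrz : r ⟨z, hzN⟩ = 0 := by
        apply hS.moduleCat_injective_f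
        rw [map_zero, hfr ⟨z, hzN⟩]
        exact hz
      exact ⟨⟨⟨z, hzN⟩, hrz⟩, rfl⟩
    exact ⟨Kr, F0, j2, q, w2, hse2, hF0, hKr⟩
  intro l
  induction l with
  | zero =>
    refine ⟨step_shift 0 base_quot base_ext, base_quot, base_ext⟩
  | succ l IH =>
    obtain ⟨IHshift, IHquot, IHext⟩ := IH
    have hquot := step_quot l
    have hext := step_ext l IHshift
    exact ⟨step_shift (l+1) hquot hext, hquot, hext⟩

/-- Extraction: `ResolutionDimLE` implies the inductive characterization. -/
lemma resDim_of_resolutionDimLE (hres : IsResolving F) :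
    ∀ (l : ℕ) (M : ModuleCat.{u} R), ResolutionDimLE F M l → ResDim F l M := by
  intro l
  induction l with
  | zero =>
    rintro M ⟨G, d, ε, hd, hε, hmem, hzero, hepi, hex0, hexs⟩
    have hd0 : d 0 = 0 := (hzero 1 (by omega)).eq_of_src _ _
    have hinj : Function.Injective ε := by
      intro a b hab
      have h0 : ε (a - b) = 0 := by rw [map_sub, hab, sub_self]
      obtain ⟨x₁, hx₁⟩ := (ShortComplex.moduleCat_exact_iff _).1 hex0 (a - b) h0
      have hzz : d 0 x₁ = (0 : G 1 ⟶ G 0) x₁ := ConcreteCategory.congr_hom hd0 x₁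
      have : a - b = 0 := by rw [← hx₁]; exact hzz
      rwa [sub_eq_zero] at this
    have hsurj : Function.Surjective ε := (ModuleCat.epi_iff_surjective ε).1 hepi
    have e : G 0 ≅ M := (LinearEquiv.ofBijective ε.hom
      ⟨hinj, hsurj⟩).toModuleIso
    exact mem_of_iso_of_resolving hres e.symm (hmem 0 le_rfl)
  | succ l IH =>
    rintro M ⟨G, d, ε, hd, hε, hmem, hzero, hepi, hex0, hexs⟩
    let K : ModuleCat.{u} R := ModuleCat.of R (LinearMap.ker ε.hom)
    let ksub : K ⟶ G 0 := ModuleCat.ofHom (LinearMap.ker ε.hom).subtype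
    have w : ksub ≫ ε = 0 := by
      apply ModuleCat.hom_ext
      apply LinearMap.ext
      intro z
      exact z.property
    have hse : (ShortComplex.mk ksub ε w).ShortExact := by
      have hmono : Mono (ShortComplex.mk ksub ε w).f :=
        (ModuleCat.mono_iff_injective ksub).2 Subtype.val_injective
      have hepi' : Epi (ShortComplex.mk ksub ε w).g := hepi
      refine ⟨?_⟩
      rw [ShortComplex.moduleCat_exact_iff]
      intro x hx
      exact ⟨⟨x, hx⟩, rfl⟩
    have hK : ResDim F l K := by
      apply IH
      refine ⟨fun i => G (i+1), fun m => d (m+1),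
        ModuleCat.ofHom (LinearMap.codRestrict (LinearMap.ker ε.hom) (d 0).hom
          (fun x => ConcreteCategory.congr_hom hε x)),
        fun m => hd (m+1), ?_, fun i hi => hmem (i+1) (by omega),
        fun i hi => hzero (i+1) (by omega), ?_, ?_, fun m => hexs (m+1)⟩
      · apply ModuleCat.hom_ext
        apply LinearMap.ext
        intro x
        apply Subtype.ext
        show d 0 (d 1 x) = 0
        exact ConcreteCategory.congr_hom (hd 0) x
      · rw [ModuleCat.epi_iff_surjective]
        rintro ⟨x, hx⟩
        obtain ⟨x₁, hx₁⟩ := (ShortComplex.moduleCat_exact_iff _).1 hex0 x hx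
        exact ⟨x₁, Subtype.ext hx₁⟩
      · rw [ShortComplex.moduleCat_exact_iff]
        intro x₂ hx₂
        have hd0 : d 0 x₂ = 0 := congrArg Subtype.val hx₂
        exact (ShortComplex.moduleCat_exact_iff _).1 (hexs 0) x₂ hd0
    exact ⟨K, G 0, ksub, ε, w, hse, hmem 0 (by omega), hK⟩

/-- Splicing: the inductive characterization implies `ResolutionDimLE`. -/
lemma resolutionDimLE_of_resDim (hres : IsResolving F) :
    ∀ (l : ℕ) (M : ModuleCat.{u} R), ResDim F l M → ResolutionDimLE F M l := by
  intro l
  induction l with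
  | zero =>
    intro M hM
    refine ⟨fun i => Nat.rec M (fun _ _ => ModuleCat.of R PUnit) i, fun m => 0, 𝟙 M,
      fun m => by simp, by simp, ?_, ?_, inferInstance, ?_, ?_⟩
    · intro i hi
      interval_cases i
      exact hM
    · intro i hi
      match i, hi with
      | (j+1), _ => exact ModuleCat.isZero_of_subsingleton _
    · rw [ShortComplex.moduleCat_exact_iff]
      intro x₂ hx₂
      refine ⟨0, ?_⟩
      rw [map_zero]
      exact hx₂.symm
    · intro m
      rw [ShortComplex.moduleCat_exact_iff]
      intro x₂ _
      exact ⟨0, Subsingleton.elim _ _⟩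
  | succ l IH =>
    rintro M ⟨K, Fm, i, p, w, hse, hFm, hK⟩
    obtain ⟨G, d, ε, hd, hε, hmem, hzero, hepi, hex0, hexs⟩ := IH K hK
    have hisurj : Function.Surjective ε := (ModuleCat.epi_iff_surjective ε).1 hepi
    have hiinj : Function.Injective i := hse.moduleCat_injective_f
    refine ⟨fun n => Nat.rec Fm (fun j _ => G j) n,
      fun m => Nat.rec (ε ≫ i) (fun j _ => d j) m, p, ?_, ?_, ?_, ?_, hse.epi_g, ?_, ?_⟩
    · intro m
      match m with
      | 0 => show d 0 ≫ (ε ≫ i) = 0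
             rw [← Category.assoc, hε, zero_comp]
      | (j+1) => exact hd j
    · show (ε ≫ i) ≫ p = 0
      rw [Category.assoc, w, comp_zero]
    · intro n hn
      match n with
      | 0 => exact hFm
      | (j+1) => exact hmem j (by omega)
    · intro n hn
      match n, hn with
      | (j+1), _ => exact hzero j (by omega)
    · rw [ShortComplex.moduleCat_exact_iff]
      intro x₂ hx₂
      obtain ⟨k, hk⟩ := (ShortComplex.moduleCat_exact_iff _).1 hse.exact x₂ hx₂
      obtain ⟨x₁, hx₁⟩ := hisurj k
      refine ⟨x₁, ?_⟩
      show i (ε x₁) = x₂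
      rw [hx₁, hk]
    · intro m
      match m with
      | 0 =>
        rw [ShortComplex.moduleCat_exact_iff]
        intro x₂ hx₂
        have hε0 : ε x₂ = 0 := by
          apply hiinj
          rw [map_zero]
          exact hx₂
        exact (ShortComplex.moduleCat_exact_iff _).1 hex0 x₂ hε0
      | (j+1) => exact hexs j

end Resolving

section Coinduction

variable {R : Type u} {A : Type u} [Ring R] [Ring A]

/-- Coinduction (followed by restriction) preserves short exactness of sequences whose
kernel has vanishing `Ext¹ (A, -)`. -/
lemma coind_map_shortExact (f : R →+* A) {S : ShortComplex (ModuleCat.{u} R)}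
    (hS : S.ShortExact) (h : Subsingleton (Abelian.Ext (AasR f) S.X₁ 1)) :
    (S.map (ModuleCat.coextendScalars f ⋙ ModuleCat.restrictScalars f)).ShortExact := by
  have hfinj : Function.Injective S.f := hS.moduleCat_injective_f
  set T := S.map (ModuleCat.coextendScalars f ⋙ ModuleCat.restrictScalars f) with hT
  have hmono : Mono T.f := by
    rw [ModuleCat.mono_iff_injective]
    intro φ ψ hab
    let φl : (ModuleCat.restrictScalars f).obj (ModuleCat.of A A) →ₗ[R] S.X₁ := φ
    let ψl : (ModuleCat.restrictScalars f).obj (ModuleCat.of A A) →ₗ[R] S.X₁ := ψ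
    have hab' : S.f.hom.comp φl = S.f.hom.comp ψl := hab
    show φl = ψl
    apply LinearMap.ext
    intro a
    exact hfinj (DFunLike.congr_fun hab' a)
  have hepi : Epi T.g := by
    rw [ModuleCat.epi_iff_surjective]
    intro ψ
    let ψl : AasR f ⟶ S.X₃ := ModuleCat.ofHom (X := AasR f) (Y := S.X₃) ψ
    obtain ⟨g', hg'⟩ := exists_lift_of_subsingleton_ext hS h ψl
    exact ⟨g'.hom, LinearMap.ext fun a => ConcreteCategory.congr_hom hg' a⟩
  refine ⟨?_⟩
  rw [ShortComplex.moduleCat_exact_iff]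
  intro φ hφ
  let φl : (ModuleCat.restrictScalars f).obj (ModuleCat.of A A) →ₗ[R] S.X₂ := φ
  have hφ' : S.g.hom.comp φl = 0 := hφ
  have hmem : ∀ a, φl a ∈ LinearMap.range S.f.hom := by
    intro a
    rw [hS.exact.moduleCat_range_eq_ker]
    exact DFunLike.congr_fun hφ' a
  let e := LinearEquiv.ofInjective S.f.hom hfinj
  let φ' : (ModuleCat.restrictScalars f).obj (ModuleCat.of A A) →ₗ[R] S.X₁ :=
    (e.symm : LinearMap.range S.f.hom →ₗ[R] S.X₁).comp
      (LinearMap.codRestrict (LinearMap.range S.f.hom) φl hmem)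
  refine ⟨φ', ?_⟩
  show S.f.hom.comp φ' = φl
  apply LinearMap.ext
  intro a
  exact apply_ofInjective_symm (R := R) S.f hfinj ⟨φl a, hmem a⟩

/-- The key induction: coinduction does not raise the inductive `F`-resolution dimension. -/
lemma resDim_coind (f : R →+* A) {F C : Set (ModuleCat.{u} R)}
    (horth : Ext1Orthogonal F C)
    (hprec : ∀ M : ModuleCat.{u} R, HasSpecialPrecover F C M)
    (hA : AasR f ∈ F)
    (hdd : ∀ X ∈ F, (ModuleCat.restrictScalars f).obj (coind f X) ∈ F)
    (hres : IsResolving F) :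
    ∀ (l : ℕ) (M : ModuleCat.{u} R), ResDim F l M →
      ResDim F l ((ModuleCat.restrictScalars f).obj (coind f M)) := by
  intro l
  induction l with
  | zero =>
    intro M hM
    exact hdd M hM
  | succ l IH =>
    intro M hM
    obtain ⟨C', Fm, i, p, w, hse, hFm, hC'⟩ := hprec M
    have hC'dim : ResDim F l C' :=
      (shift_and_ext hres l).1 (ShortComplex.mk i p w) hse hFm hM
    have hext : Subsingleton (Abelian.Ext (AasR f) C' 1) := horth (AasR f) hA C' hC'
    have hmap := coind_map_shortExact f hse hext
    exact ⟨((ShortComplex.mk i p w).map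
        (ModuleCat.coextendScalars f ⋙ ModuleCat.restrictScalars f)).X₁,
      ((ShortComplex.mk i p w).map
        (ModuleCat.coextendScalars f ⋙ ModuleCat.restrictScalars f)).X₂,
      _, _,
      ((ShortComplex.mk i p w).map
        (ModuleCat.coextendScalars f ⋙ ModuleCat.restrictScalars f)).zero,
      hmap, hdd Fm hFm, IH C' hC'dim⟩

end Coinduction

end CotorsionProof



/-- Assume the `Ext¹`-orthogonal pair `(F, C)` admits special precover
sequences, the underlying `R`-module of `A` is in `F`, the coinduction functor
`Hom_R(A, -)` preserves `F`, and `F` is resolving.  If `M` has `F`-resolution dimension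
`≤ l`, then so does the underlying `R`-module of `Hom_R(A, M)`. -/
theorem coinduction_preserves_resolution_dimension {R A : Type u} [Ring R] [Ring A]
    (f : R →+* A) (F C : Set (ModuleCat.{u} R))
    (horth : Ext1Orthogonal F C)
    (hprec : ∀ M : ModuleCat.{u} R, HasSpecialPrecover F C M)
    (hA : AasR f ∈ F)
    (hdd : ∀ X ∈ F, (ModuleCat.restrictScalars f).obj (coind f X) ∈ F)
    (hres : IsResolving F)
    (l : ℕ) (M : ModuleCat.{u} R) (hM : ResolutionDimLE F M l) :
    ResolutionDimLE F ((ModuleCat.restrictScalars f).obj (coind f M)) l := by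
  have h1 : CotorsionProof.ResDim F l M :=
    CotorsionProof.resDim_of_resolutionDimLE hres l M hM
  have h2 := CotorsionProof.resDim_coind f horth hprec hA hdd hres l M h1
  exact CotorsionProof.resolutionDimLE_of_resDim hres l _ h2

end
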